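/- Let U be a nonempty closed subset of ℝᵈ, φ : ℝⁿ × U → ℝ of class C¹ on ℝⁿ × U, and β ∈ (0, 1). Define J(x, u) := Σ_{t=0}^{∞} βᵗ φ(x_t, u_t) for x ∈ c₀(ℕ, ℝⁿ) and u ∈ ℓ∞(ℕ, U). Then J is a continuously Fréchet differentiable real-valued functional on c₀(ℕ, ℝⁿ) × ℓ∞(ℕ, U), and for all x ∈ c₀(ℕ, ℝⁿ), u ∈ ℓ∞(ℕ, U), δx ∈ c₀(ℕ, ℝⁿ), δu ∈ ℓ∞(ℕ, ℝᵈ), one has DJ(x, u)(δx, δu) = Σ_{t=0}^{∞} βᵗ ( D₁φ(x_t, u_t)δx_t + D₂φ(x_t, u_t)δu_t ). -/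

import Mathlib

open Filter Topology Bornology Set ZeroAtInfty
open scoped ENNReal

noncomputable section

instance : Fact ((1 : ℝ≥0∞) ≤ ⊤) := ⟨le_top⟩

def evC (n : ℕ) (t : ℕ) : C₀(ℕ, Fin n → ℝ) →L[ℝ] (Fin n → ℝ) :=
  LinearMap.mkContinuous
    { toFun := fun x => x t
      map_add' := fun _ _ => rfl
      map_smul' := fun _ _ => rfl } 1
    (fun x => by
      rw [one_mul]
      exact BoundedContinuousFunction.norm_coe_le_norm x.toBCF t)

def evL (d : ℕ) (t : ℕ) : lp (fun _ : ℕ => Fin d → ℝ) ⊤ →L[ℝ] (Fin d → ℝ) :=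
  LinearMap.mkContinuous
    { toFun := fun u => u t
      map_add' := fun u v => congrFun (lp.coeFn_add u v) t
      map_smul' := fun c u => congrFun (lp.coeFn_smul c u) t } 1
    (fun u => by rw [one_mul]; exact lp.norm_apply_le_norm ENNReal.top_ne_zero u t)

abbrev PS (n d : ℕ) := C₀(ℕ, Fin n → ℝ) × lp (fun _ : ℕ => Fin d → ℝ) ⊤

def evP (n d : ℕ) (t : ℕ) : PS n d →L[ℝ] ((Fin n → ℝ) × (Fin d → ℝ)) :=
  (evC n t).prodMap (evL d t)

lemma evP_apply {n d : ℕ} (t : ℕ) (p : PS n d) :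
    evP n d t p = (p.1 t, p.2 t) := rfl

lemma evP_norm_le (n d t : ℕ) : ‖evP n d t‖ ≤ 1 :=
  (evP n d t).opNorm_le_bound zero_le_one fun p => by
    rw [one_mul, show (evP n d t) p = (p.1 t, p.2 t) from rfl, Prod.norm_def, Prod.norm_def]
    exact max_le_max (BoundedContinuousFunction.norm_coe_le_norm p.1.toBCF t)
      (lp.norm_apply_le_norm ENNReal.top_ne_zero p.2 t)

/-- The `t`-th summand of the derivative series. -/
def gmap {n d : ℕ} (φ : (Fin n → ℝ) → (Fin d → ℝ) → ℝ) (β : ℝ) (t : ℕ) (p : PS n d) :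
    PS n d →L[ℝ] ℝ :=
  β ^ t • ((fderiv ℝ (fun q : (Fin n → ℝ) × (Fin d → ℝ) => φ q.1 q.2)
    (evP n d t p)).comp (evP n d t))

set_option maxHeartbeats 1000000 in
lemma gmap_norm_le {n d : ℕ} (φ : (Fin n → ℝ) → (Fin d → ℝ) → ℝ) {β : ℝ} (hβ0 : 0 < β)
    (t : ℕ) (p : PS n d) {M : ℝ} (hM0 : 0 ≤ M)
    (hb : ‖fderiv ℝ (fun q : (Fin n → ℝ) × (Fin d → ℝ) => φ q.1 q.2) (evP n d t p)‖ ≤ M) :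
    ‖gmap φ β t p‖ ≤ β ^ t * M := by
  refine ContinuousLinearMap.opNorm_le_bound _
    (mul_nonneg (pow_nonneg hβ0.le t) hM0) fun v => ?_
  have h0 : gmap φ β t p v
      = β ^ t * ((fderiv ℝ (fun q : (Fin n → ℝ) × (Fin d → ℝ) => φ q.1 q.2)
        (evP n d t p)) (evP n d t v)) := rfl
  rw [h0, norm_mul, Real.norm_eq_abs (β ^ t), abs_of_pos (pow_pos hβ0 t)]
  have h1 : ‖(fderiv ℝ (fun q : (Fin n → ℝ) × (Fin d → ℝ) => φ q.1 q.2)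
      (evP n d t p)) (evP n d t v)‖ ≤ M * ‖v‖ := by
    calc ‖(fderiv ℝ (fun q : (Fin n → ℝ) × (Fin d → ℝ) => φ q.1 q.2)
        (evP n d t p)) (evP n d t v)‖
        ≤ ‖fderiv ℝ (fun q : (Fin n → ℝ) × (Fin d → ℝ) => φ q.1 q.2)
            (evP n d t p)‖ * ‖evP n d t v‖ := ContinuousLinearMap.le_opNorm _ _
      _ ≤ M * ‖v‖ := by
          refine mul_le_mul hb ?_ (norm_nonneg _) hM0
          calc ‖evP n d t v‖ ≤ ‖evP n d t‖ * ‖v‖ := ContinuousLinearMap.le_opNorm _ _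
            _ ≤ 1 * ‖v‖ := mul_le_mul_of_nonneg_right (evP_norm_le n d t) (norm_nonneg _)
            _ = ‖v‖ := one_mul _
  calc β ^ t * ‖(fderiv ℝ (fun q : (Fin n → ℝ) × (Fin d → ℝ) => φ q.1 q.2)
      (evP n d t p)) (evP n d t v)‖
      ≤ β ^ t * (M * ‖v‖) := mul_le_mul_of_nonneg_left h1 (pow_pos hβ0 t).le
    _ = β ^ t * M * ‖v‖ := by ring

set_option maxHeartbeats 4000000 in
lemma keyD_hasFDeriv {n d : ℕ}
    (φ : (Fin n → ℝ) → (Fin d → ℝ) → ℝ) (U1 : Set (Fin d → ℝ))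
    (hΦdiff : ∀ q ∈ Set.univ ×ˢ U1,
      HasFDerivAt (fun q : (Fin n → ℝ) × (Fin d → ℝ) => φ q.1 q.2)
        (fderiv ℝ (fun q : (Fin n → ℝ) × (Fin d → ℝ) => φ q.1 q.2) q) q)
    {β : ℝ} (hβ0 : 0 < β) (hβ1 : β < 1)
    (p₀ : PS n d) (r : ℝ) (hr : 0 < r) (M : ℝ) (hM0 : 0 ≤ M)
    (hmem : ∀ p ∈ Metric.ball p₀ r, ∀ t : ℕ, evP n d t p ∈ Set.univ ×ˢ U1)
    (hbound : ∀ p ∈ Metric.ball p₀ r, ∀ t : ℕ,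
      ‖fderiv ℝ (fun q : (Fin n → ℝ) × (Fin d → ℝ) => φ q.1 q.2) (evP n d t p)‖ ≤ M ∧
      ‖φ (p.1 t) (p.2 t)‖ ≤ M) :
    (∀ p ∈ Metric.ball p₀ r,
      HasFDerivAt (fun p : PS n d => ∑' t : ℕ, β ^ t * φ (p.1 t) (p.2 t))
        (∑' t : ℕ, gmap φ β t p) p)
    ∧ (∀ p ∈ Metric.ball p₀ r, Summable fun t => gmap φ β t p) := by
  set c : ℕ → ℝ := fun t => β ^ t * M with hcdef
  have hc : Summable c := (summable_geometric_of_lt_one hβ0.le hβ1).mul_right M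
  have hfd : ∀ (t : ℕ), ∀ p ∈ Metric.ball p₀ r,
      HasFDerivAt (fun p : PS n d => β ^ t * φ (p.1 t) (p.2 t)) (gmap φ β t p) p := by
    intro t p hp
    exact ((hΦdiff _ (hmem p hp t)).comp p (evP n d t).hasFDerivAt).const_mul (β ^ t)
  have hgb : ∀ (t : ℕ), ∀ p ∈ Metric.ball p₀ r, ‖gmap φ β t p‖ ≤ c t :=
    fun t p hp => gmap_norm_le φ hβ0 t p hM0 (hbound p hp t).1
  have hsum0 : Summable fun t : ℕ => β ^ t * φ (p₀.1 t) (p₀.2 t) := by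
    refine Summable.of_norm_bounded
      (f := fun t : ℕ => β ^ t * φ (p₀.1 t) (p₀.2 t)) hc fun t => ?_
    rw [norm_mul, Real.norm_eq_abs (β ^ t), abs_of_pos (pow_pos hβ0 t)]
    exact mul_le_mul_of_nonneg_left
      ((hbound p₀ (Metric.mem_ball_self hr) t).2) (pow_pos hβ0 t).le
  have hball : IsPreconnected (Metric.ball p₀ r) := (convex_ball p₀ r).isPreconnected
  constructor
  · intro p hp
    exact hasFDerivAt_tsum_of_isPreconnected
      (f := fun (t : ℕ) (p : PS n d) => β ^ t * φ (p.1 t) (p.2 t))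
      (f' := fun t p => gmap φ β t p)
      hc Metric.isOpen_ball hball hfd hgb (Metric.mem_ball_self hr) hsum0 hp
  · intro p hp
    exact Summable.of_norm_bounded (f := fun t => gmap φ β t p) hc fun t => hgb t p hp

set_option maxHeartbeats 4000000 in
lemma keyD_cont {n d : ℕ}
    (φ : (Fin n → ℝ) → (Fin d → ℝ) → ℝ) (U1 : Set (Fin d → ℝ))
    (hΦderivcont : ContinuousOn
      (fderiv ℝ (fun q : (Fin n → ℝ) × (Fin d → ℝ) => φ q.1 q.2)) (Set.univ ×ˢ U1))
    {β : ℝ} (hβ0 : 0 < β) (hβ1 : β < 1)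
    (p₀ : PS n d) (r : ℝ) (hr : 0 < r) (M : ℝ) (hM0 : 0 ≤ M)
    (hmem : ∀ p ∈ Metric.ball p₀ r, ∀ t : ℕ, evP n d t p ∈ Set.univ ×ˢ U1)
    (hbound : ∀ p ∈ Metric.ball p₀ r, ∀ t : ℕ,
      ‖fderiv ℝ (fun q : (Fin n → ℝ) × (Fin d → ℝ) => φ q.1 q.2) (evP n d t p)‖ ≤ M ∧
      ‖φ (p.1 t) (p.2 t)‖ ≤ M) :
    ContinuousOn (fun p => ∑' t : ℕ, gmap φ β t p) (Metric.ball p₀ r) := by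
  have hc : Summable (fun t : ℕ => β ^ t * M) :=
    (summable_geometric_of_lt_one hβ0.le hβ1).mul_right M
  refine continuousOn_tsum (f := fun t p => gmap φ β t p) (fun t => ?_) hc
    (fun t p hp => gmap_norm_le φ hβ0 t p hM0 (hbound p hp t).1)
  have h1 : ContinuousOn
      (fun p => fderiv ℝ (fun q : (Fin n → ℝ) × (Fin d → ℝ) => φ q.1 q.2) (evP n d t p))
      (Metric.ball p₀ r) :=
    hΦderivcont.comp (evP n d t).continuous.continuousOn (fun p hp => hmem p hp t)
  have h2 : Continuous (fun D : ((Fin n → ℝ) × (Fin d → ℝ)) →L[ℝ] ℝ =>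
      D.comp (evP n d t)) :=
    ((ContinuousLinearMap.compL ℝ (PS n d) ((Fin n → ℝ) × (Fin d → ℝ)) ℝ).flip
      (evP n d t)).continuous
  unfold gmap
  exact (h2.comp_continuousOn h1).const_smul (β ^ t)

set_option maxHeartbeats 1000000 in
lemma key_bounds {n d : ℕ}
    (φ : (Fin n → ℝ) → (Fin d → ℝ) → ℝ) (U1 : Set (Fin d → ℝ))
    (hφ : ContDiffOn ℝ 1 (fun q : (Fin n → ℝ) × (Fin d → ℝ) => φ q.1 q.2) (Set.univ ×ˢ U1))
    (hΦderivcont : ContinuousOn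
      (fderiv ℝ (fun q : (Fin n → ℝ) × (Fin d → ℝ) => φ q.1 q.2)) (Set.univ ×ˢ U1))
    (p₀ : PS n d) (ε : ℝ) (hε : 0 < ε) (hb : ∀ t : ℕ, Metric.ball (p₀.2 t) ε ⊆ U1) :
    ∃ r > 0, ∃ M : ℝ, 0 ≤ M ∧
      (∀ p ∈ Metric.ball p₀ r, ∀ t : ℕ, evP n d t p ∈ Set.univ ×ˢ U1) ∧
      (∀ p ∈ Metric.ball p₀ r, ∀ t : ℕ,
        ‖fderiv ℝ (fun q : (Fin n → ℝ) × (Fin d → ℝ) => φ q.1 q.2) (evP n d t p)‖ ≤ M ∧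
        ‖φ (p.1 t) (p.2 t)‖ ≤ M) := by
  set Φ : (Fin n → ℝ) × (Fin d → ℝ) → ℝ := fun q => φ q.1 q.2 with hΦdef
  set C : Set (Fin d → ℝ) := ⋃ t : ℕ, Metric.closedBall (p₀.2 t) (ε / 2) with hCdef
  have hCU1 : closure C ⊆ U1 := by
    intro v hv
    obtain ⟨w, hwC, hdvw⟩ := Metric.mem_closure_iff.1 hv (ε / 4) (by positivity)
    obtain ⟨s, hs⟩ := Set.mem_iUnion.1 hwC
    apply hb s
    rw [Metric.mem_ball]
    calc dist v (p₀.2 s) ≤ dist v w + dist w (p₀.2 s) := dist_triangle _ _ _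
      _ < ε / 4 + ε / 2 := add_lt_add_of_lt_of_le hdvw (Metric.mem_closedBall.1 hs)
      _ < ε := by linarith
  have hCbd : C ⊆ Metric.closedBall 0 (‖p₀.2‖ + ε / 2) := by
    intro w hw
    obtain ⟨s, hs⟩ := Set.mem_iUnion.1 hw
    rw [Metric.mem_closedBall, dist_zero_right]
    calc ‖w‖ = ‖w - p₀.2 s + p₀.2 s‖ := by rw [sub_add_cancel]
      _ ≤ ‖w - p₀.2 s‖ + ‖p₀.2 s‖ := norm_add_le _ _
      _ ≤ ε / 2 + ‖p₀.2‖ := add_le_add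
          (by simpa [dist_eq_norm] using Metric.mem_closedBall.1 hs)
          (lp.norm_apply_le_norm ENNReal.top_ne_zero p₀.2 s)
      _ = ‖p₀.2‖ + ε / 2 := by ring
  have hCcpt : IsCompact (closure C) :=
    (isCompact_closedBall (0 : Fin d → ℝ) (‖p₀.2‖ + ε / 2)).of_isClosed_subset
      isClosed_closure (closure_minimal hCbd Metric.isClosed_closedBall)
  set S : Set ((Fin n → ℝ) × (Fin d → ℝ)) :=
    Metric.closedBall (0 : Fin n → ℝ) (‖p₀.1‖ + ε / 2) ×ˢ closure C with hSdef
  have hScpt : IsCompact S := (isCompact_closedBall _ _).prod hCcpt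
  have hSsub : S ⊆ Set.univ ×ˢ U1 := Set.prod_mono (Set.subset_univ _) hCU1
  have hcont : ContinuousOn (fun q => ‖fderiv ℝ Φ q‖ + ‖Φ q‖) S :=
    ((hΦderivcont.mono hSsub).norm.add ((hφ.continuousOn.mono hSsub).norm))
  obtain ⟨M, hM⟩ := hScpt.exists_bound_of_continuousOn hcont
  have hmem : ∀ p ∈ Metric.ball p₀ (ε / 2), ∀ t : ℕ, evP n d t p ∈ S := by
    intro p hp t
    rw [Metric.mem_ball] at hp
    constructor
    · rw [Metric.mem_closedBall, dist_zero_right]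
      calc ‖p.1 t‖ ≤ ‖p.1‖ := BoundedContinuousFunction.norm_coe_le_norm p.1.toBCF t
        _ ≤ ‖p₀.1‖ + ‖p.1 - p₀.1‖ := norm_le_insert' _ _
        _ ≤ ‖p₀.1‖ + ε / 2 := by
            refine add_le_add le_rfl ?_
            calc ‖p.1 - p₀.1‖ = dist p.1 p₀.1 := (dist_eq_norm _ _).symm
              _ ≤ dist p p₀ := le_max_left _ _
              _ ≤ ε / 2 := hp.le
    · refine subset_closure (Set.mem_iUnion.2 ⟨t, ?_⟩)
      rw [Metric.mem_closedBall]
      calc dist (p.2 t) (p₀.2 t) ≤ ‖p.2 - p₀.2‖ := by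
            simpa [dist_eq_norm, lp.coeFn_sub] using
              lp.norm_apply_le_norm ENNReal.top_ne_zero (p.2 - p₀.2) t
        _ = dist p.2 p₀.2 := (dist_eq_norm _ _).symm
        _ ≤ dist p p₀ := le_max_right _ _
        _ ≤ ε / 2 := hp.le
  refine ⟨ε / 2, by positivity, max M 0, le_max_right _ _, ?_, ?_⟩
  · exact fun p hp t => hSsub (hmem p hp t)
  · intro p hp t
    have h1 := hM _ (hmem p hp t)
    have h2 : ‖fderiv ℝ Φ (evP n d t p)‖ + ‖Φ (evP n d t p)‖ ≤ M :=
      (le_abs_self _).trans (by simpa [Real.norm_eq_abs] using h1)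
    constructor
    · exact le_max_of_le_left (le_trans (le_add_of_nonneg_right (norm_nonneg _)) h2)
    · exact le_max_of_le_left (le_trans (le_add_of_nonneg_left (norm_nonneg _)) h2)


set_option maxHeartbeats 2000000 in
/-- Proposition 3.11, smoothness of the criterion.  Let `U ⊆ ℝᵈ` be
nonempty closed, `φ : ℝⁿ × U → ℝ` of class `C¹` on `ℝⁿ × U` (total function, `C¹` on
`univ ×ˢ U₁` for an open `U₁ ⊇ U`), and `β ∈ (0,1)`.  Then
`J(x, u) := Σ_t βᵗ φ(x_t, u_t)` is a continuously Fréchet differentiable functional on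
`c₀(ℕ, ℝⁿ) × ℓ∞(ℕ, U)` — rendered as: there exist an open `O ⊇ ℓ∞(ℕ, U)` and a `C¹`
functional `Jx` on `c₀(ℕ, ℝⁿ) × O` agreeing with the sum on `c₀(ℕ, ℝⁿ) × ℓ∞(ℕ, U)` —
with `DJ(x, u)(δx, δu) = Σ_t βᵗ (D₁φ(x_t, u_t) δx_t + D₂φ(x_t, u_t) δu_t)` there. -/
theorem stmt_6 {n d : ℕ}
    (U : Set (Fin d → ℝ)) (hUne : U.Nonempty) (hUcl : IsClosed U)
    (φ : (Fin n → ℝ) → (Fin d → ℝ) → ℝ)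
    (U1 : Set (Fin d → ℝ)) (hU1open : IsOpen U1) (hUU1 : U ⊆ U1)
    (hφ : ContDiffOn ℝ 1 (fun q : (Fin n → ℝ) × (Fin d → ℝ) => φ q.1 q.2) (Set.univ ×ˢ U1))
    (β : ℝ) (hβ : 0 < β ∧ β < 1) :
    ∃ O : Set (lp (fun _ : ℕ => Fin d → ℝ) ⊤), IsOpen O ∧
      {u : lp (fun _ : ℕ => Fin d → ℝ) ⊤ | ∀ t : ℕ, u t ∈ U} ⊆ O ∧
      ∃ Jx : C₀(ℕ, Fin n → ℝ) × lp (fun _ : ℕ => Fin d → ℝ) ⊤ → ℝ,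
        -- Jx is the functional J on c₀(ℕ, ℝⁿ) × ℓ∞(ℕ, U)
        (∀ (x : C₀(ℕ, Fin n → ℝ)) (u : lp (fun _ : ℕ => Fin d → ℝ) ⊤),
          (∀ t : ℕ, u t ∈ U) → Jx (x, u) = ∑' t : ℕ, β ^ t * φ (x t) (u t)) ∧
        -- J is of class C¹
        ContDiffOn ℝ 1 Jx (Set.univ ×ˢ O) ∧
        -- formula for the differential
        (∀ (x : C₀(ℕ, Fin n → ℝ)) (u : lp (fun _ : ℕ => Fin d → ℝ) ⊤),
          (∀ t : ℕ, u t ∈ U) →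
          ∀ (δx : C₀(ℕ, Fin n → ℝ)) (δu : lp (fun _ : ℕ => Fin d → ℝ) ⊤),
            fderiv ℝ Jx (x, u) (δx, δu)
              = ∑' t : ℕ, β ^ t * (fderiv ℝ (fun y => φ y (u t)) (x t) (δx t)
                + fderiv ℝ (fun v => φ (x t) v) (u t) (δu t))) := by
  obtain ⟨hβ0, hβ1⟩ := hβ
  set O : Set (lp (fun _ : ℕ => Fin d → ℝ) ⊤) :=
    {u | ∃ ε > 0, ∀ t : ℕ, Metric.ball (u t) ε ⊆ U1} with hOdef
  have hOopen : IsOpen O := by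
    rw [Metric.isOpen_iff]
    rintro u ⟨ε, hε, hb⟩
    refine ⟨ε / 2, by positivity, fun v hv => ⟨ε / 2, by positivity, fun t w hw => ?_⟩⟩
    apply hb t
    have h1 : dist (v t) (u t) ≤ dist v u := by
      rw [dist_eq_norm, dist_eq_norm]
      simpa [lp.coeFn_sub] using lp.norm_apply_le_norm ENNReal.top_ne_zero (v - u) t
    rw [Metric.mem_ball] at hv hw ⊢
    calc dist w (u t) ≤ dist w (v t) + dist (v t) (u t) := dist_triangle _ _ _
      _ < ε / 2 + ε / 2 := add_lt_add hw (h1.trans_lt hv)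
      _ = ε := add_halves ε
  have hOsub : {u : lp (fun _ : ℕ => Fin d → ℝ) ⊤ | ∀ t : ℕ, u t ∈ U} ⊆ O := by
    intro u hu
    have hsub : Set.range (fun t : ℕ => u t) ⊆ Metric.closedBall 0 ‖u‖ := by
      rintro _ ⟨t, rfl⟩
      simpa [Metric.mem_closedBall, dist_eq_norm] using
        lp.norm_apply_le_norm ENNReal.top_ne_zero u t
    have hK : IsCompact (closure (Set.range fun t : ℕ => u t)) :=
      (isCompact_closedBall (0 : Fin d → ℝ) ‖u‖).of_isClosed_subset isClosed_closure
        (closure_minimal hsub Metric.isClosed_closedBall)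
    have hKU1 : closure (Set.range fun t : ℕ => u t) ⊆ U1 :=
      (closure_minimal (Set.range_subset_iff.2 hu) hUcl).trans hUU1
    obtain ⟨δ, hδ, hth⟩ := hK.exists_thickening_subset_open hU1open hKU1
    exact ⟨δ, hδ, fun t w hw =>
      hth (Metric.mem_thickening_iff.2 ⟨u t, subset_closure ⟨t, rfl⟩, hw⟩)⟩
  have hS₁open : IsOpen (Set.univ ×ˢ U1 : Set ((Fin n → ℝ) × (Fin d → ℝ))) :=
    isOpen_univ.prod hU1open
  have hΦdiff : ∀ q ∈ Set.univ ×ˢ U1,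
      HasFDerivAt (fun q : (Fin n → ℝ) × (Fin d → ℝ) => φ q.1 q.2)
        (fderiv ℝ (fun q : (Fin n → ℝ) × (Fin d → ℝ) => φ q.1 q.2) q) q := fun q hq =>
    ((hφ.differentiableOn one_ne_zero).differentiableAt (hS₁open.mem_nhds hq)).hasFDerivAt
  have hΦderivcont : ContinuousOn
      (fderiv ℝ (fun q : (Fin n → ℝ) × (Fin d → ℝ) => φ q.1 q.2)) (Set.univ ×ˢ U1) :=
    hφ.continuousOn_fderiv_of_isOpen hS₁open le_rfl
  -- the functional and its candidate derivative
  set Jx : PS n d → ℝ := fun p => ∑' t : ℕ, β ^ t * φ (p.1 t) (p.2 t) with hJxdef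
  set G : PS n d → (PS n d →L[ℝ] ℝ) := fun p => ∑' t : ℕ, gmap φ β t p with hGdef
  have hkey : ∀ p : PS n d, p.2 ∈ O →
      HasFDerivAt Jx (G p) p ∧ (Summable fun t => gmap φ β t p) ∧
        ∃ r > 0, ContinuousOn G (Metric.ball p r) := by
    rintro p ⟨ε, hε, hb⟩
    obtain ⟨r, hr, M, hM0, hmem, hbound⟩ := key_bounds φ U1 hφ hΦderivcont p ε hε hb
    obtain ⟨h1, h2⟩ := keyD_hasFDeriv φ U1 hΦdiff hβ0 hβ1 p r hr M hM0 hmem hbound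
    exact ⟨h1 p (Metric.mem_ball_self hr), h2 p (Metric.mem_ball_self hr),
      r, hr, keyD_cont φ U1 hΦderivcont hβ0 hβ1 p r hr M hM0 hmem hbound⟩
  have hW : IsOpen (Set.univ ×ˢ O : Set (PS n d)) := isOpen_univ.prod hOopen
  have hdiff : ∀ p ∈ (Set.univ ×ˢ O : Set (PS n d)), HasFDerivAt Jx (G p) p :=
    fun p hp => (hkey p hp.2).1
  have hGcont : ContinuousOn G (Set.univ ×ˢ O : Set (PS n d)) := by
    intro p hp
    obtain ⟨r, hr, h3⟩ := (hkey p hp.2).2.2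
    exact (h3.continuousAt (Metric.ball_mem_nhds _ hr)).continuousWithinAt
  have hfderiv_eq : ∀ p ∈ (Set.univ ×ˢ O : Set (PS n d)), fderiv ℝ Jx p = G p :=
    fun p hp => (hdiff p hp).fderiv
  refine ⟨O, hOopen, hOsub, Jx, fun x u hu => rfl, ?_, ?_⟩
  · -- C¹
    have h0 : (1 : WithTop ℕ∞) = 0 + 1 := (zero_add 1).symm
    rw [h0, contDiffOn_succ_iff_fderiv_of_isOpen hW]
    refine ⟨fun p hp => (hdiff p hp).differentiableAt.differentiableWithinAt,
      by simp, ?_⟩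
    rw [contDiffOn_zero]
    exact hGcont.congr hfderiv_eq
  · -- formula for the differential
    intro x u hu δx δu
    have hpmem : ((x, u) : PS n d) ∈ (Set.univ ×ˢ O : Set (PS n d)) :=
      ⟨Set.mem_univ _, hOsub hu⟩
    rw [hfderiv_eq _ hpmem]
    have hs : Summable fun t => gmap φ β t ((x, u) : PS n d) := (hkey _ hpmem.2).2.1
    have hmap : G ((x, u) : PS n d) ((δx, δu) : PS n d)
        = ∑' t : ℕ, gmap φ β t ((x, u) : PS n d) ((δx, δu) : PS n d) :=
      (ContinuousLinearMap.apply ℝ ℝ ((δx, δu) : PS n d)).map_tsum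
        (f := fun t => gmap φ β t ((x, u) : PS n d)) hs
    rw [hmap]
    refine tsum_congr fun t => ?_
    have hq : ((x t, u t) : (Fin n → ℝ) × (Fin d → ℝ)) ∈ Set.univ ×ˢ U1 :=
      ⟨Set.mem_univ _, hUU1 (hu t)⟩
    have hD := hΦdiff _ hq
    have h1 : HasFDerivAt (fun y => φ y (u t))
        ((fderiv ℝ (fun q : (Fin n → ℝ) × (Fin d → ℝ) => φ q.1 q.2) (x t, u t)).comp
          (ContinuousLinearMap.inl ℝ _ _)) (x t) :=
      (hD.comp (x t) (hasFDerivAt_prodMk_left (𝕜 := ℝ) (F := Fin d → ℝ) (x t) (u t)) :)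
    have h2 : HasFDerivAt (fun v => φ (x t) v)
        ((fderiv ℝ (fun q : (Fin n → ℝ) × (Fin d → ℝ) => φ q.1 q.2) (x t, u t)).comp
          (ContinuousLinearMap.inr ℝ _ _)) (u t) :=
      hD.comp (u t) (hasFDerivAt_prodMk_right (x t) (u t))
    rw [h1.fderiv, h2.fderiv]
    have h3 : gmap φ β t ((x, u) : PS n d) ((δx, δu) : PS n d)
        = β ^ t * ((fderiv ℝ (fun q : (Fin n → ℝ) × (Fin d → ℝ) => φ q.1 q.2) (x t, u t))
          (δx t, δu t)) := rfl
    rw [h3]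
    congr 1
    have hsplit : ((δx t, δu t) : (Fin n → ℝ) × (Fin d → ℝ))
        = (δx t, (0 : Fin d → ℝ)) + ((0 : Fin n → ℝ), δu t) := by
      simp [Prod.mk_add_mk]
    rw [hsplit, (fderiv ℝ (fun q : (Fin n → ℝ) × (Fin d → ℝ) => φ q.1 q.2)
      (x t, u t)).map_add]
    rfl
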